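/- For β ∈ E_Γ and e_β = gcd({n} ∪ {β' ∈ E_Γ : β' ≤ β}), every integer β + k·e_β with k ≥ 1 belongs to E_Γ. -/
import Mathlib


open scoped Classical

/-- The set of exponents `E_Γ = ⋃_{1 ≤ j ≤ g} {β_j + k e_j : k ∈ ℤ_{≥0}}`. -/
def ExpSet (g : ℕ) (β e : ℕ → ℕ) : Set ℕ :=
  {m | ∃ j, 1 ≤ j ∧ j ≤ g ∧ ∃ k : ℕ, m = β j + k * e j}

/-- `e_β = gcd({n} ∪ {β' ∈ E_Γ : β' ≤ β})`. -/
noncomputable def eOf (n g : ℕ) (β e : ℕ → ℕ) (b : ℕ) : ℕ :=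
  Nat.gcd n (((Finset.range (b + 1)).filter (fun m => m ∈ ExpSet g β e)).gcd id)

/-- For `β ∈ E_Γ` and `e_β = gcd({n} ∪ {β' ∈ E_Γ : β' ≤ β})`, every integer
`β + k·e_β` with `k ≥ 1` belongs to `E_Γ`. -/
theorem add_mul_eOf_mem_expSet (n g : ℕ) (hn : 2 ≤ n) (hg : 1 ≤ g)
    (β e : ℕ → ℕ)
    (he0 : e 0 = n)
    (he : ∀ j, 1 ≤ j → j ≤ g → e j = Nat.gcd (e (j - 1)) (β j))
    (heg : e g = 1)
    (hβmono : ∀ j, 1 ≤ j → j < g → β j < β (j + 1))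
    (b : ℕ) (hb : b ∈ ExpSet g β e) :
    ∀ k : ℕ, 1 ≤ k → b + k * eOf n g β e b ∈ ExpSet g β e := by
  intro k hk
  obtain ⟨i, hi1, hig, k0, hbeq⟩ := hb
  -- divisibility chain: e c ∣ e a for a ≤ c ≤ g
  have hchain : ∀ c, c ≤ g → ∀ a, a ≤ c → e c ∣ e a := by
    intro c
    induction c with
    | zero => intro _ a ha; simp [Nat.le_zero.mp ha]
    | succ c ih =>
      intro hc a ha
      have hdvd : e (c + 1) ∣ e c := by
        have h := he (c + 1) (Nat.succ_le_succ (Nat.zero_le c)) hc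
        simp only [Nat.add_sub_cancel] at h
        rw [h]; exact Nat.gcd_dvd_left _ _
      rcases Nat.lt_or_ge a (c + 1) with h | h
      · exact hdvd.trans (ih (le_trans (Nat.le_succ c) hc) a (Nat.lt_succ_iff.mp h))
      · have : a = c + 1 := le_antisymm ha h
        simp [this]
  have heβ : ∀ j, 1 ≤ j → j ≤ g → e j ∣ β j := by
    intro j h1 h2; rw [he j h1 h2]; exact Nat.gcd_dvd_right _ _
  set S := (Finset.Icc 1 g).filter (fun j => β j ≤ b) with hS
  have hiS : i ∈ S := by
    refine Finset.mem_filter.mpr ⟨Finset.mem_Icc.mpr ⟨hi1, hig⟩, ?_⟩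
    omega
  have hSne : S.Nonempty := ⟨i, hiS⟩
  set J := S.max' hSne with hJ
  have hJS : J ∈ S := S.max'_mem hSne
  obtain ⟨hJIcc, hβJ⟩ := Finset.mem_filter.mp hJS
  obtain ⟨hJ1, hJg⟩ := Finset.mem_Icc.mp hJIcc
  -- e J divides each member of E_Γ that is ≤ b
  have hkey : ∀ i' k', 1 ≤ i' → i' ≤ g → β i' + k' * e i' ≤ b → e J ∣ β i' + k' * e i' := by
    intro i' k' h1' hg' hle
    have hi'S : i' ∈ S := Finset.mem_filter.mpr ⟨Finset.mem_Icc.mpr ⟨h1', hg'⟩, by omega⟩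
    have hi'J : i' ≤ J := S.le_max' i' hi'S
    have h1 : e J ∣ e i' := hchain J hJg i' hi'J
    have h2 : e J ∣ β i' := h1.trans (heβ i' h1' hg')
    exact Nat.dvd_add h2 (h1.mul_left k')
  have hdvd_n : e J ∣ n := he0 ▸ hchain J hJg 0 (Nat.zero_le J)
  have hdvd_gcd :
      e J ∣ ((Finset.range (b + 1)).filter (fun m => m ∈ ExpSet g β e)).gcd id := by
    apply Finset.dvd_gcd
    intro m hm
    obtain ⟨hmr, hmE⟩ := Finset.mem_filter.mp hm
    obtain ⟨i', h1', hg', k', hm'⟩ := hmE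
    have hmle : m ≤ b := Nat.lt_succ_iff.mp (Finset.mem_range.mp hmr)
    simpa [id, ← hm'] using hkey i' k' h1' hg' (hm' ▸ hmle)
  have hdvd_eb : e J ∣ eOf n g β e b := Nat.dvd_gcd hdvd_n hdvd_gcd
  have hdvd_b : e J ∣ b := hbeq ▸ hkey i k0 hi1 hig (le_of_eq hbeq.symm)
  have hdvd_βJ : e J ∣ β J := heβ J hJ1 hJg
  have hdvd_diff : e J ∣ b - β J + k * eOf n g β e b :=
    Nat.dvd_add ((Nat.dvd_sub hdvd_b hdvd_βJ)) (hdvd_eb.mul_left k)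
  obtain ⟨q, hq⟩ := hdvd_diff
  refine ⟨J, hJ1, hJg, q, ?_⟩
  have hq' : b - β J + k * eOf n g β e b = q * e J := by rw [hq, Nat.mul_comm]
  set c := k * eOf n g β e b with hc
  set d := q * e J with hd
  omega
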